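/- Let β ∈ (0,1)^n with ‖β‖₁ ≤ 1, w ∈ relint(Δⁿ), and let p be the relative entropy projection of w onto C(β) = {x ∈ Δⁿ : x ≥ β componentwise}. Then the normalizing constant λ = (1 - Σ_{j∈Ψ} βⱼ)/(1 - Σ_{j∈Ψ} wⱼ), where Ψ = {i : pᵢ = βᵢ}, satisfies λ ≤ 1. -/

import Mathlib

open Finset Real
open scoped Classical

private lemma sum_two_update {n : ℕ} (f : Fin n → ℝ) (i j : Fin n) (hij : i ≠ j) (a b : ℝ) :
    ∑ k, Function.update (Function.update f i a) j b k
      = ∑ k, f k - f i - f j + a + b := by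
  rw [Finset.sum_update_of_mem (Finset.mem_univ j)]
  rw [Finset.sum_update_of_mem (by simp [hij] : i ∈ Finset.univ \ {j})]
  have h1 : ∑ k, f k = f j + ∑ k ∈ Finset.univ \ {j}, f k := by
    rw [Finset.sum_eq_sum_sdiff_singleton_add (Finset.mem_univ j)]; ring
  have h2 : ∑ k ∈ Finset.univ \ {j}, f k
      = f i + ∑ k ∈ (Finset.univ \ {j}) \ {i}, f k := by
    rw [Finset.sum_eq_sum_sdiff_singleton_add (by simp [hij] : i ∈ Finset.univ \ {j})]; ring
  rw [h1, h2]; ring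

private lemma key_lemma {n : ℕ} (β w p : Fin n → ℝ)
    (hβ : ∀ i, 0 < β i) (hw : ∀ i, 0 < w i)
    (hpβ : ∀ i, β i ≤ p i) (hsum : ∑ i, p i = 1)
    (hmin : ∀ u : Fin n → ℝ, (∀ i, β i ≤ u i) → (∀ i, 0 ≤ u i) → ∑ i, u i = 1 →
      ∑ i, p i * Real.log (p i / w i) ≤ ∑ i, u i * Real.log (u i / w i))
    (i j : Fin n) (hi : β i < p i) : p i * w j ≤ p j * w i := by
  by_cases hij : i = j
  · subst hij; rw [mul_comm]
  by_contra hcon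
  push_neg at hcon
  -- hcon : p j * w i < p i * w j
  have hwi := hw i
  have hwj := hw j
  have hpi : 0 < p i := (hβ i).trans hi
  have hpj : 0 < p j := (hβ j).trans_le (hpβ j)
  set δ : ℝ := p i * w j - p j * w i with hδ
  have hδpos : 0 < δ := by simp [hδ]; linarith
  set t : ℝ := min (δ / (2 * (w i + w j))) ((p i - β i) / 2) with ht
  have ht0 : 0 < t := by
    apply lt_min
    · positivity
    · linarith
  have ht1 : t < p i - β i := by
    have : t ≤ (p i - β i) / 2 := min_le_right _ _
    linarith
  have ht2 : (p j + t) * w i < (p i - t) * w j := by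
    have h1 : t ≤ δ / (2 * (w i + w j)) := min_le_left _ _
    have h2 : t * (w i + w j) ≤ δ / 2 := by
      calc t * (w i + w j) ≤ δ / (2 * (w i + w j)) * (w i + w j) := by
            apply mul_le_mul_of_nonneg_right h1; positivity
        _ = δ / 2 := by field_simp
    nlinarith
  have hBt : 0 < p i - t := by have := hβ i; linarith
  have hAt : 0 < p j + t := by linarith
  -- the perturbed point
  set u : Fin n → ℝ := Function.update (Function.update p i (p i - t)) j (p j + t) with hu
  have hui : u i = p i - t := by
    simp [hu, Function.update_apply, hij]
  have huj : u j = p j + t := by simp [hu]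
  have huk : ∀ k, k ≠ i → k ≠ j → u k = p k := by
    intro k hki hkj
    simp [hu, Function.update_apply, hki, hkj]
  have hufeas : ∀ k, β k ≤ u k := by
    intro k
    by_cases h1 : k = j
    · rw [h1, huj]; have := hpβ j; linarith
    by_cases h2 : k = i
    · rw [h2, hui]; linarith
    · rw [huk k h2 h1]; exact hpβ k
  have hupos : ∀ k, 0 ≤ u k := fun k => le_of_lt ((hβ k).trans_le (hufeas k))
  have husum : ∑ k, u k = 1 := by
    rw [hu, sum_two_update p i j hij, hsum]; ring
  have hD := hmin u hufeas hupos husum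
  have hsum2 : ∑ k, u k * Real.log (u k / w k)
      = ∑ k, p k * Real.log (p k / w k) - p i * Real.log (p i / w i)
        - p j * Real.log (p j / w j)
        + (p i - t) * Real.log ((p i - t) / w i)
        + (p j + t) * Real.log ((p j + t) / w j) := by
    have heq : (fun k => u k * Real.log (u k / w k))
        = Function.update (Function.update (fun k => p k * Real.log (p k / w k)) i
            ((p i - t) * Real.log ((p i - t) / w i))) j
            ((p j + t) * Real.log ((p j + t) / w j)) := by
      funext k
      by_cases h1 : k = j
      · subst h1; rw [huj]; simp
      by_cases h2 : k = i
      · subst h2; rw [hui]; simp [Function.update_apply, hij, h1]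
      · rw [huk k h2 h1]; simp [Function.update_apply, h1, h2]
    calc ∑ k, u k * Real.log (u k / w k)
        = ∑ k, Function.update (Function.update (fun k => p k * Real.log (p k / w k)) i
            ((p i - t) * Real.log ((p i - t) / w i))) j
            ((p j + t) * Real.log ((p j + t) / w j)) k := by rw [← heq]
      _ = _ := by rw [sum_two_update _ i j hij]
  rw [hsum2] at hD
  -- hD gives the first-order inequality
  have hfo : 0 ≤ (p j + t) * Real.log ((p j + t) / w j) - p j * Real.log (p j / w j)
      + (p i - t) * Real.log ((p i - t) / w i) - p i * Real.log (p i / w i) := by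
    linarith
  -- convexity bounds
  have bound1 : (p j + t) * Real.log ((p j + t) / w j) - p j * Real.log (p j / w j)
      ≤ t * Real.log ((p j + t) / w j) + t := by
    have hlog : Real.log ((p j + t) / w j) - Real.log (p j / w j)
        = Real.log ((p j + t) / p j) := by
      rw [Real.log_div (by positivity) (by positivity),
          Real.log_div (by positivity) (by positivity),
          Real.log_div (by positivity) (by positivity)]
      ring
    have h1 : Real.log ((p j + t) / p j) ≤ (p j + t) / p j - 1 :=
      Real.log_le_sub_one_of_pos (by positivity)
    have h2 : p j * Real.log ((p j + t) / p j) ≤ t := by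
      have := mul_le_mul_of_nonneg_left h1 (le_of_lt hpj)
      calc p j * Real.log ((p j + t) / p j) ≤ p j * ((p j + t) / p j - 1) := this
        _ = t := by field_simp; ring
    have h2' : p j * Real.log ((p j + t) / w j) - p j * Real.log (p j / w j) ≤ t := by
      have h3 : p j * (Real.log ((p j + t) / w j) - Real.log (p j / w j)) ≤ t := by
        rw [hlog]; exact h2
      linarith [mul_sub (p j) (Real.log ((p j + t) / w j)) (Real.log (p j / w j))]
    have hexp : (p j + t) * Real.log ((p j + t) / w j)
        = p j * Real.log ((p j + t) / w j) + t * Real.log ((p j + t) / w j) := by ring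
    linarith
  have bound2 : (p i - t) * Real.log ((p i - t) / w i) - p i * Real.log (p i / w i)
      ≤ -(t * Real.log ((p i - t) / w i)) - t := by
    have hlog : Real.log ((p i - t) / w i) - Real.log (p i / w i)
        = Real.log ((p i - t) / p i) := by
      rw [Real.log_div (by positivity) (by positivity),
          Real.log_div (by positivity) (by positivity),
          Real.log_div (by positivity) (by positivity)]
      ring
    have h1 : Real.log ((p i - t) / p i) ≤ (p i - t) / p i - 1 :=
      Real.log_le_sub_one_of_pos (by positivity)
    have h2 : p i * Real.log ((p i - t) / p i) ≤ -t := by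
      have := mul_le_mul_of_nonneg_left h1 (le_of_lt hpi)
      calc p i * Real.log ((p i - t) / p i) ≤ p i * ((p i - t) / p i - 1) := this
        _ = -t := by field_simp; ring
    have h2' : p i * Real.log ((p i - t) / w i) - p i * Real.log (p i / w i) ≤ -t := by
      have h3 : p i * (Real.log ((p i - t) / w i) - Real.log (p i / w i)) ≤ -t := by
        rw [hlog]; exact h2
      linarith [mul_sub (p i) (Real.log ((p i - t) / w i)) (Real.log (p i / w i))]
    have hexp : (p i - t) * Real.log ((p i - t) / w i)
        = p i * Real.log ((p i - t) / w i) - t * Real.log ((p i - t) / w i) := by ring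
    linarith
  have hloglog : Real.log ((p i - t) / w i) ≤ Real.log ((p j + t) / w j) := by
    have h3 : t * Real.log ((p i - t) / w i) ≤ t * Real.log ((p j + t) / w j) := by
      linarith
    exact le_of_mul_le_mul_left h3 ht0
  have hfin : (p i - t) / w i ≤ (p j + t) / w j :=
    (Real.log_le_log_iff (by positivity) (by positivity)).mp hloglog
  rw [div_le_div_iff₀ hwi hwj] at hfin
  linarith

theorem stmt_1 (n : ℕ) (β w p : Fin n → ℝ)
    (hβ : ∀ i, β i ∈ Set.Ioo (0:ℝ) 1) (hβ1 : ∑ i, β i ≤ 1)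
    (hw : ∀ i, 0 < w i) (hw1 : ∑ i, w i = 1)
    (hpC : (∀ i, β i ≤ p i) ∧ (∀ i, 0 ≤ p i) ∧ ∑ i, p i = 1)
    (hmin : ∀ u : Fin n → ℝ, (∀ i, β i ≤ u i) → (∀ i, 0 ≤ u i) → ∑ i, u i = 1 →
      ∑ i, p i * Real.log (p i / w i) ≤ ∑ i, u i * Real.log (u i / w i)) :
    (1 - ∑ j ∈ Finset.univ.filter (fun j => p j = β j), β j) /
      (1 - ∑ j ∈ Finset.univ.filter (fun j => p j = β j), w j) ≤ 1 := by
  obtain ⟨hpβ, hp0, hp1⟩ := hpC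
  have hβpos : ∀ i, 0 < β i := fun i => (hβ i).1
  set Ψ : Finset (Fin n) := Finset.univ.filter (fun j => p j = β j) with hΨ
  have hβp : ∑ j ∈ Ψ, β j = ∑ j ∈ Ψ, p j :=
    Finset.sum_congr rfl (fun j hj => ((Finset.mem_filter.mp hj).2).symm)
  have hsub : Ψ ⊆ Finset.univ := Finset.subset_univ _
  have hnum : 1 - ∑ j ∈ Ψ, β j = ∑ j ∈ Finset.univ \ Ψ, p j := by
    rw [hβp, ← hp1, ← Finset.sum_sdiff hsub]; ring
  have hden : 1 - ∑ j ∈ Ψ, w j = ∑ j ∈ Finset.univ \ Ψ, w j := by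
    rw [← hw1, ← Finset.sum_sdiff hsub]; ring
  rcases Finset.eq_empty_or_nonempty (Finset.univ \ Ψ) with hemp | hne
  · rw [hnum, hden, hemp, Finset.sum_empty]
    norm_num
  · have hdpos : 0 < 1 - ∑ j ∈ Ψ, w j := by
      rw [hden]
      exact Finset.sum_pos (fun k _ => hw k) hne
    rw [div_le_one hdpos]
    rw [hnum, hden]
    by_contra hcon
    push_neg at hcon
    -- hcon : ∑ w < ∑ p over univ \ Ψ
    have hex : ∃ i ∈ Finset.univ \ Ψ, w i < p i := by
      by_contra hall
      push_neg at hall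
      exact absurd (Finset.sum_le_sum (fun k hk => hall k hk)) (not_le.mpr hcon)
    obtain ⟨i, hiΨ, hiw⟩ := hex
    have hiβ : β i < p i := by
      have : p i ≠ β i := by
        intro h
        exact (Finset.mem_sdiff.mp hiΨ).2 (Finset.mem_filter.mpr ⟨Finset.mem_univ i, h⟩)
      exact lt_of_le_of_ne (hpβ i) (Ne.symm this)
    have hall : ∀ j : Fin n, w j < p j := by
      intro j
      have hkey := key_lemma β w p hβpos hw hpβ hp1 hmin i j hiβ
      have hwi := hw i
      have hwj := hw j
      nlinarith
    have : (1:ℝ) < 1 := by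
      calc (1:ℝ) = ∑ j, w j := hw1.symm
        _ < ∑ j, p j := Finset.sum_lt_sum_of_nonempty ⟨i, Finset.mem_univ i⟩
            (fun j _ => hall j)
        _ = 1 := hp1
    exact absurd this (lt_irrefl 1)
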